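/- arXiv:1303.1659 — 4 statements merged into one kernel-verified Lean document; each statement's English description precedes it below -/
import Mathlib

section
/- Let D be a (v,k,λ) difference set of order n in a finite abelian group G, with nontrivial character values among {√n, a, ā} where a·ā = n, and let |U_a| denote the number of nonprincipal characters χ with χ(D) = a. Then v·|D ∩ D^{(-1)}| = |U_a|(a² + ā²) + |U_c|·n + k², where |U_c| is the number of nonprincipal characters with χ(D) = √n; in particular |D ∩ D^{(-1)}| = k - (√n - d₁ + (k-√n)/v)(2√n + a + ā) < k, where d₁ = 1 if 1_G ∈ D and 0 otherwise. -/
open Finset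

/-- `D` is a `(v,k,λ)` difference set. -/
def IsDiffSet {G : Type*} [Group G] [DecidableEq G] (D : Finset G) (l : ℕ) : Prop :=
  ∀ g : G, g ≠ 1 → ((D ×ˢ D).filter (fun p => p.1 * p.2⁻¹ = g)).card = l

/-- Multiplicative characters of `G` correspond to additive characters of `Additive G`. -/
noncomputable def mchar (G : Type*) [CommGroup G] : AddChar (Additive G) ℂ ≃ (G →* ℂ) where
  toFun ψ :=
    { toFun := fun g => ψ (Additive.ofMul g)
      map_one' := ψ.map_zero_eq_one
      map_mul' := fun x y => ψ.map_add_eq_mul x y }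
  invFun χ :=
    { toFun := fun g => χ g.toMul
      map_zero_eq_one' := χ.map_one
      map_add_eq_mul' := fun x y => χ.map_mul x.toMul y.toMul }
  left_inv ψ := by ext; rfl
  right_inv χ := by ext; rfl

noncomputable instance charFintype (G : Type*) [CommGroup G] [Finite G] : Fintype (G →* ℂ) :=
  Fintype.ofEquiv _ (mchar G)

/-- Orthogonality: `∑_χ χ(g)` is `|G|` if `g = 1` and `0` otherwise. -/
lemma sum_char_apply {G : Type*} [CommGroup G] [Fintype G] [DecidableEq G] (g : G) :
    ∑ χ : G →* ℂ, χ g = if g = 1 then (Fintype.card G : ℂ) else 0 := by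
  classical
  rw [← Equiv.sum_comp (mchar G) (fun χ => χ g)]
  simpa [mchar] using AddChar.sum_apply_eq_ite (Additive.ofMul g)

lemma card_char (G : Type*) [CommGroup G] [Fintype G] :
    Fintype.card (G →* ℂ) = Fintype.card G := by
  classical
  rw [← Fintype.card_congr (mchar G), AddChar.card_eq]
  exact Fintype.card_congr Additive.toMul

lemma nat_card_filter {α : Type*} [Fintype α] (p : α → Prop) [DecidablePred p] :
    Nat.card {x // p x} = (Finset.univ.filter p).card := by
  rw [Nat.card_eq_fintype_card, Fintype.card_subtype]

/-- Conjugate character. -/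
noncomputable def cchar {G : Type*} [CommGroup G] (χ : G →* ℂ) : G →* ℂ :=
  (starRingEnd ℂ).toMonoidHom.comp χ

lemma cchar_apply {G : Type*} [CommGroup G] (χ : G →* ℂ) (g : G) :
    cchar χ g = (starRingEnd ℂ) (χ g) := rfl

lemma cchar_cchar {G : Type*} [CommGroup G] (χ : G →* ℂ) : cchar (cchar χ) = χ := by
  ext g; simp [cchar_apply]

lemma cchar_ne_one {G : Type*} [CommGroup G] {χ : G →* ℂ} (h : χ ≠ 1) : cchar χ ≠ 1 := by
  intro hc
  apply h
  have := congrArg cchar hc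
  rw [cchar_cchar] at this
  rw [this]
  ext g; simp [cchar_apply]

lemma sum_cchar {G : Type*} [CommGroup G] (χ : G →* ℂ) (D : Finset G) :
    ∑ d ∈ D, cchar χ d = (starRingEnd ℂ) (∑ d ∈ D, χ d) := by
  rw [map_sum]; rfl

/-- For a difference set `D` of order `n` whose nontrivial character values lie in
`{√n, a, ā}` (with `a` non-real and `a·ā = n`), writing `|U_a|`, `|U_c|` for the
numbers of nonprincipal characters with value `a`, `√n` respectively, one has
`v·|D ∩ D^{(-1)}| = |U_a|(a² + ā²) + |U_c|·n + k²`, and hence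
`|D ∩ D^{(-1)}| = k - (√n - d₁ + (k-√n)/v)(2√n + a + ā) < k`. -/
theorem card_D_inter_Dinv {G : Type*} [CommGroup G] [Fintype G] [DecidableEq G]
    (D : Finset G) (v k lam n : ℕ) (hv : Fintype.card G = v)
    (hk : D.card = k) (hDS : IsDiffSet D lam) (hlam : 0 < lam) (hlk : lam < k)
    (hn : n = k - lam)
    (r : ℕ) (hr : r ^ 2 = n)
    (a : ℂ) (ha : a * (starRingEnd ℂ) a = (n : ℂ)) (haa : a ≠ (starRingEnd ℂ) a)
    (hvals : ∀ χ : G →* ℂ, χ ≠ 1 →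
      (∑ d ∈ D, χ d) ∈ ({(r : ℂ), a, (starRingEnd ℂ) a} : Set ℂ))
    (Ua Uc : ℕ)
    (hUa : Ua = Nat.card {χ : G →* ℂ // χ ≠ 1 ∧ ∑ d ∈ D, χ d = a})
    (hUc : Uc = Nat.card {χ : G →* ℂ // χ ≠ 1 ∧ ∑ d ∈ D, χ d = (r : ℂ)})
    (d₁ : ℕ) (hd₁ : d₁ = if (1 : G) ∈ D then 1 else 0) :
    ((v : ℂ) * ((D ∩ D.image (·⁻¹)).card : ℂ)
        = (Ua : ℂ) * (a ^ 2 + ((starRingEnd ℂ) a) ^ 2) + (Uc : ℂ) * (n : ℂ) + (k : ℂ) ^ 2) ∧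
      (((D ∩ D.image (·⁻¹)).card : ℂ)
        = (k : ℂ) - ((r : ℂ) - (d₁ : ℂ) + ((k : ℂ) - (r : ℂ)) / (v : ℂ)) *
            (2 * (r : ℂ) + a + (starRingEnd ℂ) a)) ∧
      (D ∩ D.image (·⁻¹)).card < k := by
  classical
  set c : ℂ := (starRingEnd ℂ) a with hc
  set m : ℕ := (D ∩ D.image (·⁻¹)).card with hm
  set S : (G →* ℂ) → ℂ := fun χ => ∑ d ∈ D, χ d with hS
  have hv1 : 0 < v := hv ▸ Fintype.card_pos
  have hk2 : 2 ≤ k := by omega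
  have hn1 : 1 ≤ n := by omega
  have hr1 : 1 ≤ r := by nlinarith
  have hS1 : S 1 = (k : ℂ) := by simp [hS, hk]
  -- Fact A : `∑ χ, S χ ^ 2 = v * m`
  have hbij : ((D ×ˢ D).filter (fun p => p.1 * p.2 = 1)).card = m := by
    apply Finset.card_bij (fun p _ => p.1)
    · rintro ⟨x, y⟩ hp
      simp only [mem_filter, mem_product] at hp
      obtain ⟨⟨h1, h2⟩, h3⟩ := hp
      simp only [mem_inter, mem_image]
      exact ⟨h1, y, h2, by rw [inv_eq_iff_mul_eq_one, mul_comm]; exact h3⟩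
    · rintro ⟨x, y⟩ hp ⟨x', y'⟩ hp' h
      simp only [mem_filter, mem_product] at hp hp'
      dsimp at h
      subst h
      have : y = y' := mul_left_cancel (hp.2.trans hp'.2.symm)
      simp [this]
    · intro d hd
      simp only [hm, mem_inter, mem_image] at hd
      obtain ⟨hd1, x, hx, hxd⟩ := hd
      refine ⟨(d, d⁻¹), ?_, rfl⟩
      simp only [mem_filter, mem_product]
      exact ⟨⟨hd1, by rw [← hxd]; simpa using hx⟩, mul_inv_cancel d⟩
  have factA : ∑ χ : G →* ℂ, (S χ) ^ 2 = (v : ℂ) * (m : ℂ) := by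
    have h1 : ∀ χ : G →* ℂ, (S χ) ^ 2 = ∑ p ∈ D ×ˢ D, χ (p.1 * p.2) := by
      intro χ
      rw [hS, sq, Finset.sum_mul_sum, Finset.sum_product]
      simp [map_mul]
    simp_rw [h1]
    rw [Finset.sum_comm]
    have h2 : ∀ p ∈ D ×ˢ D, ∑ χ : G →* ℂ, χ (p.1 * p.2)
        = if p.1 * p.2 = 1 then (v : ℂ) else 0 := by
      intro p _
      rw [sum_char_apply, hv]
    rw [Finset.sum_congr rfl h2, Finset.sum_ite, Finset.sum_const, Finset.sum_const_zero,
      add_zero, hbij, nsmul_eq_mul, mul_comm]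
  -- Fact B : `∑ χ, S χ = v * d₁`
  have factB : ∑ χ : G →* ℂ, S χ = (v : ℂ) * (d₁ : ℂ) := by
    rw [hS, Finset.sum_comm]
    have h2 : ∀ d ∈ D, ∑ χ : G →* ℂ, χ d = if d = 1 then (v : ℂ) else 0 := by
      intro d _
      rw [sum_char_apply, hv]
    rw [Finset.sum_congr rfl h2, Finset.sum_ite_eq' D 1 (fun _ => (v : ℂ)), hd₁]
    split <;> simp
  -- counting relation `k*k = k + lam*(v-1)`
  have hdiag : (D ×ˢ D).filter (fun p => p.1 * p.2⁻¹ = 1) = D.diag := by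
    ext ⟨x, y⟩
    simp only [mem_filter, mem_product, Finset.mem_diag, mul_inv_eq_one]
    constructor
    · rintro ⟨⟨h1, _⟩, h3⟩; exact ⟨h1, h3⟩
    · rintro ⟨h1, h3⟩; exact ⟨⟨h1, h3 ▸ h1⟩, h3⟩
  have hkk : k * k = k + lam * (v - 1) := by
    have hfib : (D ×ˢ D).card
        = ∑ g ∈ (univ : Finset G), ((D ×ˢ D).filter (fun p => p.1 * p.2⁻¹ = g)).card :=
      Finset.card_eq_sum_card_fiberwise (fun p _ => mem_univ _)
    rw [Finset.card_product, hk] at hfib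
    rw [← Finset.sum_erase_add _ _ (mem_univ (1 : G))] at hfib
    have hrest : ∑ g ∈ (univ : Finset G).erase 1,
        ((D ×ˢ D).filter (fun p => p.1 * p.2⁻¹ = g)).card = lam * (v - 1) := by
      rw [Finset.sum_congr rfl (fun g hg => hDS g (Finset.mem_erase.mp hg).1),
        Finset.sum_const, Finset.card_erase_of_mem (mem_univ _), card_univ, hv, smul_eq_mul,
        mul_comm]
    rw [hrest, hdiag, Finset.diag_card, hk] at hfib
    omega
  -- partition of the nontrivial characters
  set T : Finset (G →* ℂ) := univ.filter (fun χ => ¬ (χ = 1)) with hT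
  set Tc : Finset (G →* ℂ) := univ.filter (fun χ => χ ≠ 1 ∧ S χ = (r : ℂ)) with hTc
  set Ta : Finset (G →* ℂ) := univ.filter (fun χ => χ ≠ 1 ∧ S χ = a) with hTa
  set Tb : Finset (G →* ℂ) := univ.filter (fun χ => χ ≠ 1 ∧ S χ = c) with hTb
  have hra : (r : ℂ) ≠ a := fun h => haa (by rw [hc, ← h]; simp)
  have hrc : (r : ℂ) ≠ c := by
    intro h
    have h2 : (r : ℂ) = a := by
      have h3 := congrArg (starRingEnd ℂ) h
      simpa [hc] using h3
    exact haa (by rw [← h2]; exact h)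
  have hac : a ≠ c := haa
  have hcardUa : Ua = Ta.card := by rw [hUa, hTa, nat_card_filter]
  have hcardUc : Uc = Tc.card := by rw [hUc, hTc, nat_card_filter]
  have hcardUb : Tb.card = Ta.card := by
    apply Finset.card_bij (fun χ _ => cchar χ)
    · intro χ hχ
      simp only [hTb, mem_filter, mem_univ, true_and] at hχ
      simp only [hTa, mem_filter, mem_univ, true_and]
      refine ⟨cchar_ne_one hχ.1, ?_⟩
      rw [show S (cchar χ) = (starRingEnd ℂ) (S χ) from sum_cchar χ D, hχ.2, hc]
      simp
    · intro χ hχ χ' hχ' h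
      have := congrArg cchar h
      rwa [cchar_cchar, cchar_cchar] at this
    · intro χ hχ
      simp only [hTa, mem_filter, mem_univ, true_and] at hχ
      refine ⟨cchar χ, ?_, cchar_cchar χ⟩
      simp only [hTb, mem_filter, mem_univ, true_and]
      refine ⟨cchar_ne_one hχ.1, ?_⟩
      rw [show S (cchar χ) = (starRingEnd ℂ) (S χ) from sum_cchar χ D, hχ.2, hc]
  have hTsplit : T = Tc ∪ (Ta ∪ Tb) := by
    ext χ
    simp only [hT, hTc, hTa, hTb, mem_union, mem_filter, mem_univ, true_and]
    constructor
    · intro hχ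
      have := hvals χ hχ
      simp only [Set.mem_insert_iff, Set.mem_singleton_iff] at this
      rcases this with h | h | h
      · exact Or.inl ⟨hχ, h⟩
      · exact Or.inr (Or.inl ⟨hχ, h⟩)
      · exact Or.inr (Or.inr ⟨hχ, h⟩)
    · rintro (⟨h, _⟩ | ⟨h, _⟩ | ⟨h, _⟩) <;> exact h
  have hdisj1 : Disjoint Ta Tb := by
    rw [Finset.disjoint_left]
    intro χ h1 h2
    simp only [hTa, hTb, mem_filter] at h1 h2
    exact hac (h1.2.2 ▸ h2.2.2)
  have hdisj2 : Disjoint Tc (Ta ∪ Tb) := by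
    rw [Finset.disjoint_left]
    intro χ h1 h2
    simp only [hTc, hTa, hTb, mem_union, mem_filter] at h1 h2
    rcases h2 with h2 | h2
    · exact hra (h1.2.2 ▸ h2.2.2)
    · exact hrc (h1.2.2 ▸ h2.2.2)
  have hTcard : T.card = v - 1 := by
    have hTe : T = univ.erase (1 : G →* ℂ) := by
      ext χ; simp [hT, Finset.mem_erase, and_comm]
    rw [hTe, Finset.card_erase_of_mem (mem_univ _), card_univ, card_char, hv]
  have hcount : v = 1 + Uc + 2 * Ua := by
    have hsum : T.card = Tc.card + (Ta.card + Tb.card) := by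
      rw [hTsplit, Finset.card_union_of_disjoint hdisj2, Finset.card_union_of_disjoint hdisj1]
    omega
  -- splitting sums over all characters
  have hsplit : ∀ f : (G →* ℂ) → ℂ,
      ∑ χ : G →* ℂ, f χ
        = f 1 + (∑ χ ∈ Tc, f χ + (∑ χ ∈ Ta, f χ + ∑ χ ∈ Tb, f χ)) := by
    intro f
    rw [← Finset.sum_filter_add_sum_filter_not univ (fun χ => χ = 1) f]
    congr 1
    · rw [Finset.filter_eq']
      simp
    · rw [← hT, hTsplit, Finset.sum_union hdisj2, Finset.sum_union hdisj1]
  have hsumc : ∀ (f : (G →* ℂ) → ℂ) (x : ℂ) (U : Finset (G →* ℂ)),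
      (∀ χ ∈ U, f χ = x) → ∑ χ ∈ U, f χ = (U.card : ℂ) * x := by
    intro f x U h
    rw [Finset.sum_congr rfl h, Finset.sum_const, nsmul_eq_mul]
  -- the complex equations
  have e6 : ((r : ℂ)) ^ 2 = (n : ℂ) := by exact_mod_cast hr
  have e1 : (v : ℂ) * m = k ^ 2 + Uc * n + Ua * (a ^ 2 + c ^ 2) := by
    rw [← factA, hsplit (fun χ => S χ ^ 2)]
    rw [hsumc _ ((r : ℂ) ^ 2) Tc (fun χ hχ => by
        rw [(Finset.mem_filter.mp hχ).2.2]),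
      hsumc _ (a ^ 2) Ta (fun χ hχ => by rw [(Finset.mem_filter.mp hχ).2.2]),
      hsumc _ (c ^ 2) Tb (fun χ hχ => by rw [(Finset.mem_filter.mp hχ).2.2]),
      hS1, e6, ← hcardUa, ← hcardUc]
    have : (Tb.card : ℂ) = (Ua : ℂ) := by rw [hcardUb, ← hcardUa]
    rw [this]
    ring
  have e2 : (k : ℂ) + Uc * r + Ua * (a + c) = v * d₁ := by
    rw [← factB, hsplit S]
    rw [hsumc _ ((r : ℂ)) Tc (fun χ hχ => (Finset.mem_filter.mp hχ).2.2),
      hsumc _ a Ta (fun χ hχ => (Finset.mem_filter.mp hχ).2.2),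
      hsumc _ c Tb (fun χ hχ => (Finset.mem_filter.mp hχ).2.2),
      hS1, ← hcardUa, ← hcardUc]
    have : (Tb.card : ℂ) = (Ua : ℂ) := by rw [hcardUb, ← hcardUa]
    rw [this]
    ring
  have e3 : (v : ℂ) = 1 + Uc + 2 * Ua := by exact_mod_cast hcount
  have e4 : (k : ℂ) * k = k + lam * ((v : ℂ) - 1) := by
    have h := congrArg (Nat.cast (R := ℂ)) hkk
    push_cast [Nat.cast_sub hv1] at h
    exact h
  have e7 : (n : ℂ) = (k : ℂ) - lam := by
    rw [hn]
    push_cast [Nat.cast_sub hlk.le]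
    ring
  have h1 : (Ua : ℂ) * (2 * r - (a + c)) = v * r - v * d₁ + k - r := by
    linear_combination -e2 - (r : ℂ) * e3
  have h2 : (v : ℂ) * m = v * k + Ua * ((a + c) ^ 2 - 4 * n) := by
    linear_combination e1 + e4 + ((v : ℂ) - 1) * e7 - (n : ℂ) * e3 - 2 * (Ua : ℂ) * ha
  have h3 : (v : ℂ) * m = v * k - (v * r - v * d₁ + k - r) * (2 * r + a + c) := by
    linear_combination h2 + 4 * (Ua : ℂ) * e6 - (2 * (r : ℂ) + a + c) * h1
  have hVne : (v : ℂ) ≠ 0 := Nat.cast_ne_zero.mpr (by omega)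
  have part1 : (v : ℂ) * m = (Ua : ℂ) * (a ^ 2 + c ^ 2) + Uc * n + (k : ℂ) ^ 2 := by
    linear_combination e1
  have part2 : (m : ℂ)
      = (k : ℂ) - ((r : ℂ) - d₁ + ((k : ℂ) - r) / v) * (2 * (r : ℂ) + a + c) := by
    field_simp
    linear_combination h3
  have h4 : (v : ℂ) * m = v * k + Ua * (a - c) ^ 2 := by
    linear_combination h2 + 4 * (Ua : ℂ) * ha
  have hmk : m ≤ k := hk ▸ Finset.card_le_card Finset.inter_subset_left
  have hne : m ≠ k := by
    intro h
    have hMK : (m : ℂ) = k := by exact_mod_cast congrArg (Nat.cast (R := ℂ)) h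
    have h5 : (Ua : ℂ) * (a - c) ^ 2 = 0 := by
      linear_combination (v : ℂ) * hMK - h4
    rcases mul_eq_zero.mp h5 with h6 | h6
    · have hUa0 : Ua = 0 := by exact_mod_cast h6
      have e2' : (k : ℂ) + Uc * r = v * d₁ := by
        linear_combination e2 - (a + c) * h6
      have eNat : k + Uc * r = v * d₁ := by exact_mod_cast e2'
      have hUcr : Uc ≤ Uc * r := Nat.le_mul_of_pos_right _ hr1
      have hd1le : d₁ ≤ 1 := by rw [hd₁]; split <;> omega
      have hvd : v * d₁ ≤ v := by
        calc v * d₁ ≤ v * 1 := Nat.mul_le_mul_left v hd1le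
          _ = v := mul_one v
      have hk1 : k + Uc * r ≤ 1 + Uc * r := by
        calc k + Uc * r = v * d₁ := eNat
          _ ≤ v := hvd
          _ = 1 + Uc + 2 * Ua := hcount
          _ = 1 + Uc := by rw [hUa0]; ring
          _ ≤ 1 + Uc * r := by omega
      have : k ≤ 1 := by omega
      omega
    · exact haa (by rwa [pow_eq_zero_iff (by norm_num), sub_eq_zero] at h6)
  exact ⟨part1, part2, lt_of_le_of_ne hmk hne⟩
end

section
/- Let D be a difference set in a finite abelian group G with exactly three nontrivial character values √n, a, ā. Then D + D^{(-1)} ≠ G - 1_G + 2d₁·1_G in ℤ[G]; equivalently at least one of E₁ = (D ∩ D^{(-1)}) \ {1_G} and E₄ = G \ (D ∪ D^{(-1)} ∪ {1_G}) is nonempty. -/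
open Finset

lemma sum_char_eq_zero {G : Type*} [CommGroup G] [Fintype G] (χ : G →* ℂ) (hχ : χ ≠ 1) :
    ∑ g : G, χ g = 0 := by
  obtain ⟨g₀, hg₀⟩ : ∃ g, χ g ≠ 1 := by
    by_contra h; push_neg at h; exact hχ (MonoidHom.ext fun g => h g)
  have h1 : χ g₀ * ∑ g : G, χ g = ∑ g : G, χ g := by
    rw [Finset.mul_sum]
    calc ∑ g : G, χ g₀ * χ g = ∑ g : G, χ (g₀ * g) := by simp [map_mul]
    _ = ∑ g : G, χ g := Equiv.sum_comp (Equiv.mulLeft g₀) (fun g => χ g)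
  have h2 : (χ g₀ - 1) * ∑ g : G, χ g = 0 := by linear_combination h1
  rcases mul_eq_zero.mp h2 with h | h
  · exact absurd (sub_eq_zero.mp h) hg₀
  · exact h

/-- If a difference set `D` has exactly three nontrivial character values
`√n, a, ā`, then `D + D^{(-1)} ≠ G - 1 + 2d₁·1` in `ℤ[G]`; equivalently, at least
one of `E₁ = (D ∩ D^{(-1)}) \ {1}` and `E₄ = G \ (D ∪ D^{(-1)} ∪ {1})` is nonempty. -/
theorem E1_or_E4_nonempty {G : Type*} [CommGroup G] [Fintype G] [DecidableEq G]
    (D : Finset G) (lam n : ℕ) (hDS : IsDiffSet D lam)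
    (r : ℕ) (hr : r ^ 2 = n)
    (a : ℂ) (ha : a * (starRingEnd ℂ) a = (n : ℂ)) (haa : a ≠ (starRingEnd ℂ) a)
    (hvals : {z : ℂ | ∃ χ : G →* ℂ, χ ≠ 1 ∧ ∑ d ∈ D, χ d = z}
      = {(r : ℂ), a, (starRingEnd ℂ) a})
    (h3 : ({(r : ℂ), a, (starRingEnd ℂ) a} : Set ℂ).ncard = 3)
    (d₁ : ℕ) (hd₁ : d₁ = if (1 : G) ∈ D then 1 else 0) :
    ((∑ d ∈ D, MonoidAlgebra.single d (1 : ℤ)) +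
        (∑ d ∈ D, MonoidAlgebra.single d⁻¹ (1 : ℤ)) ≠
      (∑ g : G, MonoidAlgebra.single g (1 : ℤ)) - 1 +
        (2 * (d₁ : ℤ)) • (1 : MonoidAlgebra ℤ G)) ∧
      (((D ∩ D.image (·⁻¹)) \ {1}).Nonempty ∨
        (Finset.univ \ (D ∪ D.image (·⁻¹) ∪ {1})).Nonempty) := by
  classical
  have hT : ∀ g : G, g ∈ D.image (·⁻¹) ↔ g⁻¹ ∈ D := by
    intro g
    simp only [Finset.mem_image]
    constructor
    · rintro ⟨d, hd, rfl⟩; simpa using hd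
    · intro h; exact ⟨g⁻¹, h, inv_inv g⟩
  -- central contradiction
  have hkey : (D ∩ D.image (·⁻¹)) \ {1} = ∅ →
      univ \ (D ∪ D.image (·⁻¹) ∪ {1}) = ∅ → False := by
    intro h1 h4
    have hdisj : ∀ g : G, g ≠ 1 → ¬(g ∈ D ∧ g⁻¹ ∈ D) := by
      rintro g hg ⟨hgD, hgT⟩
      have : g ∈ (D ∩ D.image (·⁻¹)) \ {1} := by
        rw [Finset.mem_sdiff, Finset.mem_inter, hT, Finset.mem_singleton]
        exact ⟨⟨hgD, hgT⟩, hg⟩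
      rw [h1] at this
      exact Finset.notMem_empty g this
    have hcov : ∀ g : G, g ≠ 1 → g ∈ D ∨ g⁻¹ ∈ D := by
      intro g hg
      by_contra hc; push_neg at hc
      have : g ∈ univ \ (D ∪ D.image (·⁻¹) ∪ {1}) := by
        rw [Finset.mem_sdiff, Finset.mem_union, Finset.mem_union, hT, Finset.mem_singleton]
        exact ⟨Finset.mem_univ _, by tauto⟩
      rw [h4] at this
      exact Finset.notMem_empty g this
    have hchar : ∀ χ : G →* ℂ, χ ≠ 1 →
        (∑ d ∈ D, χ d) + (∑ d ∈ D, χ d⁻¹) = 2 * (d₁ : ℂ) - 1 := by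
      intro χ hχ
      have hsum0 : ∑ g : G, χ g = 0 := sum_char_eq_zero χ hχ
      have himg : ∑ d ∈ D, χ d⁻¹ = ∑ g ∈ D.image (·⁻¹), χ g :=
        (Finset.sum_image (fun x _ y _ h => inv_injective h)).symm
      rw [himg, ← Finset.sum_union_inter]
      by_cases h1D : (1 : G) ∈ D
      · have hU : D ∪ D.image (·⁻¹) = univ := by
          apply Finset.eq_univ_iff_forall.mpr
          intro g
          rcases eq_or_ne g 1 with rfl | hg
          · exact Finset.mem_union_left _ h1D
          · rcases hcov g hg with h | h
            · exact Finset.mem_union_left _ h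
            · exact Finset.mem_union_right _ ((hT g).mpr h)
        have hI : D ∩ D.image (·⁻¹) = {1} := by
          apply Finset.Subset.antisymm
          · intro g hgmem
            rw [Finset.mem_inter, hT] at hgmem
            rcases eq_or_ne g 1 with rfl | hg
            · simp
            · exact absurd hgmem (hdisj g hg)
          · intro g hgmem
            rw [Finset.mem_singleton] at hgmem
            subst hgmem
            rw [Finset.mem_inter, hT, inv_one]
            exact ⟨h1D, h1D⟩
        rw [hU, hI, hsum0, Finset.sum_singleton, map_one, hd₁, if_pos h1D]
        norm_num
      · have hU : D ∪ D.image (·⁻¹) = univ \ {1} := by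
          ext g
          rw [Finset.mem_sdiff, Finset.mem_union, hT, Finset.mem_singleton]
          constructor
          · rintro (h | h)
            · refine ⟨Finset.mem_univ _, ?_⟩; rintro rfl; exact h1D h
            · refine ⟨Finset.mem_univ _, ?_⟩; rintro rfl; rw [inv_one] at h; exact h1D h
          · rintro ⟨-, hg⟩; exact hcov g hg
        have hI : D ∩ D.image (·⁻¹) = ∅ := by
          apply Finset.eq_empty_iff_forall_notMem.mpr
          intro g hgmem
          rw [Finset.mem_inter, hT] at hgmem
          rcases eq_or_ne g 1 with rfl | hg
          · exact h1D hgmem.1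
          · exact hdisj g hg hgmem
        have hsd : ∑ g ∈ univ \ {1}, χ g = ∑ g : G, χ g - ∑ g ∈ ({1} : Finset G), χ g := by
          rw [eq_sub_iff_add_eq, Finset.sum_sdiff (Finset.subset_univ _)]
        rw [hU, hI, Finset.sum_empty, hsd, hsum0, Finset.sum_singleton, map_one,
          hd₁, if_neg h1D]
        norm_num
    -- the character value argument
    have hrmem : (r : ℂ) ∈ {z : ℂ | ∃ χ : G →* ℂ, χ ≠ 1 ∧ ∑ d ∈ D, χ d = z} := by
      rw [hvals]; left; rfl
    obtain ⟨χ, hχ, hχr⟩ := hrmem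
    set ψ : G →* ℂ := χ.comp invMonoidHom with hψdef
    have hψapp : ∀ g : G, ψ g = χ g⁻¹ := fun g => rfl
    have hψne : ψ ≠ 1 := by
      intro h
      apply hχ
      ext g
      have := DFunLike.congr_fun h g⁻¹
      simpa [hψapp] using this
    have hψmem : (∑ d ∈ D, ψ d) ∈ ({(r : ℂ), a, (starRingEnd ℂ) a} : Set ℂ) := by
      rw [← hvals]; exact ⟨ψ, hψne, rfl⟩
    have heq : (r : ℂ) + ∑ d ∈ D, ψ d = 2 * (d₁ : ℂ) - 1 := by
      have := hchar χ hχ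
      rw [hχr] at this
      simpa [hψapp] using this
    rcases hψmem with h | h | h
    · rw [h] at heq
      have : 2 * r + 1 = 2 * d₁ := by
        have : ((2 * r + 1 : ℕ) : ℂ) = ((2 * d₁ : ℕ) : ℂ) := by
          push_cast
          linear_combination heq
        exact_mod_cast this
      omega
    · rw [h] at heq
      have ha' : a = 2 * (d₁ : ℂ) - 1 - r := by linear_combination heq
      exact haa (by rw [ha']; simp [Complex.conj_ofNat])
    · rw [h] at heq
      have ha' : (starRingEnd ℂ) a = 2 * (d₁ : ℂ) - 1 - r := by linear_combination heq
      have ha2 : a = 2 * (d₁ : ℂ) - 1 - r := by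
        rw [← Complex.conj_conj a, ha']; simp [Complex.conj_ofNat]
      exact haa (ha2.trans ha'.symm)
  have h2 : (((D ∩ D.image (·⁻¹)) \ {1}).Nonempty ∨
      (univ \ (D ∪ D.image (·⁻¹) ∪ {1})).Nonempty) := by
    by_contra hc
    push_neg at hc
    exact hkey hc.1 hc.2
  refine ⟨?_, h2⟩
  intro heq
  have hco : ∀ g : G, g ≠ 1 →
      ((if g ∈ D then (1 : ℤ) else 0) + (if g⁻¹ ∈ D then (1 : ℤ) else 0)) = 1 := by
    intro g hg
    have h := congrArg (fun x : MonoidAlgebra ℤ G => Finsupp.applyAddHom (M := ℤ) g x.coeff) heq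
    simp only [MonoidAlgebra.coeff_add, MonoidAlgebra.coeff_sub, MonoidAlgebra.coeff_sum,
      MonoidAlgebra.coeff_smul, map_add, map_sub, map_zsmul, map_sum] at h
    have hev : ∀ (x : G) (c : ℤ), Finsupp.applyAddHom (M := ℤ) g (MonoidAlgebra.single x c).coeff
        = if x = g then c else 0 := fun x c => Finsupp.single_apply
    have hev1 : Finsupp.applyAddHom (M := ℤ) g (1 : MonoidAlgebra ℤ G).coeff
        = if (1 : G) = g then 1 else 0 := by
      rw [MonoidAlgebra.one_def]; exact hev 1 1
    simp only [hev, hev1] at h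
    rw [Finset.sum_ite_eq' D g (fun _ => (1 : ℤ))] at h
    simp only [inv_eq_iff_eq_inv] at h
    rw [Finset.sum_ite_eq' D g⁻¹ (fun _ => (1 : ℤ))] at h
    rw [Finset.sum_ite_eq' Finset.univ g (fun _ => (1 : ℤ)), if_pos (Finset.mem_univ g),
      if_neg (show ¬(1 : G) = g from fun hh => hg hh.symm)] at h
    simpa using h
  apply hkey
  · apply Finset.eq_empty_iff_forall_notMem.mpr
    intro g hgmem
    rw [Finset.mem_sdiff, Finset.mem_inter, hT, Finset.mem_singleton] at hgmem
    have := hco g hgmem.2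
    rw [if_pos hgmem.1.1, if_pos hgmem.1.2] at this
    norm_num at this
  · apply Finset.eq_empty_iff_forall_notMem.mpr
    intro g hgmem
    rw [Finset.mem_sdiff, Finset.mem_union, Finset.mem_union, hT,
      Finset.mem_singleton] at hgmem
    push_neg at hgmem
    obtain ⟨-, ⟨hg1, hg2⟩, hg3⟩ := hgmem
    have := hco g hg3
    rw [if_neg hg1, if_neg hg2] at this
    norm_num at this
end

section
/- Let D be a (v,k,λ) difference set of order n = k - λ in a finite abelian group G, and let q be a prime dividing n with gcd(q, v) = 1. Suppose the nontrivial character values of D are √n, a, ā, where a ∈ ℚ(√d) for a negative squarefree d, and suppose 2√n - a - ā divides v. Then σ_q fixes a and ā, and consequently D^{(q)} = D, i.e., q is a multiplier of D. -/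
open Finset

private lemma int_dvd_of_eq_mul (q : ℕ) (hq : 0 < q) (m : ℤ) (w : ℂ)
    (hw : IsIntegral ℤ w) (h : (m : ℂ) = (q : ℂ) * w) : (q : ℤ) ∣ m := by
  have hq0 : ((q : ℚ) : ℂ) ≠ 0 := by
    push_cast
    exact_mod_cast Nat.cast_ne_zero.mpr hq.ne'
  have hqQ : ((q:ℚ)) ≠ 0 := by exact_mod_cast hq.ne'
  have hweq : w = algebraMap ℚ ℂ ((m : ℚ) / (q : ℚ)) := by
    have : ((q:ℂ)) ≠ 0 := by exact_mod_cast hq.ne'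
    rw [map_div₀, map_intCast, map_natCast, h, mul_div_cancel_left₀ _ this]
  rw [hweq] at hw
  have hint : IsIntegral ℤ ((m : ℚ) / (q : ℚ)) :=
    (isIntegral_algebraMap_iff (algebraMap ℚ ℂ).injective).mp hw
  obtain ⟨y, hy⟩ := IsIntegrallyClosed.isIntegral_iff.mp hint
  have hy' : ((y:ℤ):ℚ) = (m:ℚ)/(q:ℚ) := hy
  have : ((q * y : ℤ) : ℚ) = ((m:ℤ):ℚ) := by
    push_cast
    rw [hy']
    field_simp
  exact ⟨y, by exact_mod_cast this.symm⟩

private lemma exists_int_sum_pow_prime {ι : Type*} (q : ℕ) (hq : q.Prime)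
    (s : Finset ι) (f : ι → ℂ) (hf : ∀ i ∈ s, IsIntegral ℤ (f i)) :
    ∃ w : ℂ, IsIntegral ℤ w ∧ (∑ i ∈ s, f i) ^ q = (∑ i ∈ s, f i ^ q) + (q : ℂ) * w := by
  classical
  induction s using Finset.induction_on with
  | empty => exact ⟨0, isIntegral_zero, by simp [zero_pow hq.ne_zero]⟩
  | @insert x s hx ih =>
    obtain ⟨w, hw, hsum⟩ := ih (fun i hi => hf i (Finset.mem_insert_of_mem hi))
    have hfx : IsIntegral ℤ (f x) := hf x (Finset.mem_insert_self x s)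
    have hfs : IsIntegral ℤ (∑ i ∈ s, f i) :=
      IsIntegral.sum _ (fun i hi => hf i (Finset.mem_insert_of_mem hi))
    have hnatint : ∀ m : ℕ, IsIntegral ℤ ((m : ℕ) : ℂ) := fun m =>
      ⟨Polynomial.X - Polynomial.C (m : ℤ), Polynomial.monic_X_sub_C _, by simp⟩
    set c : ℂ := ∑ k ∈ Finset.Ioo 0 q,
      (f x) ^ k * (∑ i ∈ s, f i) ^ (q - k) * ((q.choose k / q : ℕ) : ℂ) with hc
    have hcint : IsIntegral ℤ c :=
      IsIntegral.sum _ (fun k _ => ((hfx.pow _).mul (hfs.pow _)).mul (hnatint _))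
    refine ⟨c + w, hcint.add hw, ?_⟩
    rw [Finset.sum_insert hx, Finset.sum_insert hx, add_pow_prime_eq hq, hsum]
    have key : (f x * (q:ℂ) * ∑ i ∈ s, f i) * ∑ k ∈ Finset.Ioo 0 q, f x ^ (k - 1) *
        (∑ i ∈ s, f i) ^ (q - k - 1) * ((q.choose k / q : ℕ) : ℂ) = (q:ℂ) * c := by
      rw [hc, Finset.mul_sum (a := (q:ℂ)), Finset.mul_sum (a := f x * (q:ℂ) * ∑ i ∈ s, f i)]
      apply Finset.sum_congr rfl
      intro k hk
      obtain ⟨h1, h2⟩ := Finset.mem_Ioo.mp hk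
      rw [show f x ^ k = f x * f x ^ (k - 1) by rw [← pow_succ']; congr 1; omega,
        show (∑ i ∈ s, f i) ^ (q - k) = (∑ i ∈ s, f i) * (∑ i ∈ s, f i) ^ (q - k - 1) by
          rw [← pow_succ']; congr 1; omega]
      ring
    linear_combination key

private def luc (A n : ℤ) : ℕ → ℤ
  | 0 => 2
  | 1 => A
  | (m+2) => A * luc A n (m+1) - n * luc A n m

private lemma luc_complex (A n : ℤ) (b c : ℂ) (hs : b + c = (A : ℂ)) (hp : b * c = (n : ℂ)) :
    ∀ m, (luc A n m : ℂ) = b ^ m + c ^ m := by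
  have key : ∀ m, ((luc A n m : ℂ) = b ^ m + c ^ m) ∧
      ((luc A n (m+1) : ℂ) = b ^ (m+1) + c ^ (m+1)) := by
    intro m
    induction m with
    | zero =>
      constructor
      · norm_num [luc]
      · show ((luc A n 1 : ℤ) : ℂ) = _
        rw [show luc A n 1 = A from rfl, ← hs]
        ring
    | succ m ih =>
      refine ⟨ih.2, ?_⟩
      show ((luc A n (m+2) : ℤ) : ℂ) = _
      rw [show luc A n (m+2) = A * luc A n (m+1) - n * luc A n m from rfl]
      push_cast
      rw [ih.1, ih.2, ← hs, ← hp]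
      ring
  exact fun m => (key m).1

private lemma luc_mod (A n : ℤ) (q : ℤ) (hn : q ∣ n) :
    ∀ m, q ∣ (luc A n (m+1) - A ^ (m+1)) := by
  intro m
  induction m with
  | zero => simp [luc]
  | succ m ih =>
    have : luc A n (m+2) - A ^ (m+2) =
        A * (luc A n (m+1) - A ^ (m+1)) - n * luc A n m := by
      rw [show luc A n (m+2) = A * luc A n (m+1) - n * luc A n m from rfl]
      ring
    rw [this]
    exact dvd_sub (ih.mul_left A) ((hn.mul_right _))

private lemma conj_int {x : ℂ} (h : IsIntegral ℤ x) : IsIntegral ℤ ((starRingEnd ℂ) x) :=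
  h.map (starRingEnd ℂ).toIntAlgHom

private lemma natpow_int (m : ℕ) : IsIntegral ℤ ((m : ℕ) : ℂ) :=
  ⟨Polynomial.X - Polynomial.C (m : ℤ), Polynomial.monic_X_sub_C _, by simp⟩

private lemma caseR (q : ℕ) (hq : q.Prime) (n r : ℕ) (A : ℤ) (a w : ℂ)
    (hw : IsIntegral ℤ w)
    (hqn : (q:ℤ) ∣ (n:ℤ)) (hqr : (q:ℤ) ∣ (r:ℤ)) (hqA : ¬ (q:ℤ) ∣ A)
    (hL : ∀ m, (luc A (n:ℤ) m : ℂ) = a ^ m + (starRingEnd ℂ) a ^ m)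
    (heq : (r:ℂ) - a ^ q = (q:ℂ) * w) : False := by
  have heq2 : (r:ℂ) - (starRingEnd ℂ) a ^ q = (q:ℂ) * (starRingEnd ℂ) w := by
    have h := congrArg (starRingEnd ℂ) heq
    simpa [map_sub, map_mul, map_pow] using h
  have hM : ((2 * (r:ℤ) - luc A (n:ℤ) q : ℤ) : ℂ) = (q:ℂ) * (w + (starRingEnd ℂ) w) := by
    push_cast [hL q]
    linear_combination heq + heq2
  have hd1 : (q:ℤ) ∣ (2 * (r:ℤ) - luc A (n:ℤ) q) :=
    int_dvd_of_eq_mul q hq.pos _ _ (hw.add (conj_int hw)) hM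
  have hd2 : (q:ℤ) ∣ (luc A (n:ℤ) q - A ^ q) := by
    have h := luc_mod A (n:ℤ) (q:ℤ) hqn (q - 1)
    rwa [Nat.sub_add_cancel hq.one_lt.le] at h
  have hd3 : (q:ℤ) ∣ A ^ q := by
    have hAq : A ^ q = 2 * (r:ℤ) - ((2 * (r:ℤ) - luc A (n:ℤ) q) + (luc A (n:ℤ) q - A ^ q)) := by
      ring
    rw [hAq]
    exact dvd_sub (hqr.mul_left 2) (dvd_add hd1 hd2)
  exact hqA ((Nat.prime_iff_prime_int.mp hq).dvd_of_dvd_pow hd3)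

private lemma caseR2 (q : ℕ) (hq : q.Prime) (r : ℕ) (A : ℤ) (a w : ℂ)
    (hw : IsIntegral ℤ w)
    (hA : (A : ℂ) = a + (starRingEnd ℂ) a)
    (hqr : (q:ℤ) ∣ (r:ℤ)) (hqA : ¬ (q:ℤ) ∣ A)
    (heq : a - (r:ℂ) ^ q = (q:ℂ) * w) : False := by
  have heq2 : (starRingEnd ℂ) a - (r:ℂ) ^ q = (q:ℂ) * (starRingEnd ℂ) w := by
    have h := congrArg (starRingEnd ℂ) heq
    simpa [map_sub, map_mul, map_pow] using h
  have hM : ((A - 2 * (r:ℤ) ^ q : ℤ) : ℂ) = (q:ℂ) * (w + (starRingEnd ℂ) w) := by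
    push_cast [hA]
    linear_combination heq + heq2
  have hd1 : (q:ℤ) ∣ (A - 2 * (r:ℤ) ^ q) :=
    int_dvd_of_eq_mul q hq.pos _ _ (hw.add (conj_int hw)) hM
  have hd2 : (q:ℤ) ∣ A := by
    have hAe : A = (A - 2 * (r:ℤ) ^ q) + 2 * (r:ℤ) ^ q := by ring
    rw [hAe]
    exact dvd_add hd1 ((dvd_pow hqr hq.ne_zero).mul_left 2)
  exact hqA hd2

private lemma caseCross (q : ℕ) (hq : q.Prime) (n : ℕ) (A : ℤ) (a w : ℂ)
    (hw : IsIntegral ℤ w) (hint : IsIntegral ℤ a)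
    (ha : a * (starRingEnd ℂ) a = (n : ℂ))
    (hqn : (q:ℤ) ∣ (n:ℤ)) (hqA : ¬ (q:ℤ) ∣ A)
    (hL : ∀ m, (luc A (n:ℤ) m : ℂ) = a ^ m + (starRingEnd ℂ) a ^ m)
    (heq : (starRingEnd ℂ) a - a ^ q = (q:ℂ) * w) : False := by
  set M : ℤ := (n:ℤ) + (n:ℤ) ^ q - luc A (n:ℤ) (q+1) with hMdef
  have hcast : (M : ℂ) = ((starRingEnd ℂ) a - a ^ q) * (a - (starRingEnd ℂ) a ^ q) := by
    rw [hMdef]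
    push_cast [hL (q+1)]
    rw [← ha]
    ring
  have hM : (M : ℂ) = (q:ℂ) * (w * (a - (starRingEnd ℂ) a ^ q)) := by
    rw [hcast, heq]; ring
  have hd1 : (q:ℤ) ∣ M :=
    int_dvd_of_eq_mul q hq.pos _ _ (hw.mul (hint.sub ((conj_int hint).pow _))) hM
  have hd2 : (q:ℤ) ∣ (luc A (n:ℤ) (q+1) - A ^ (q+1)) := luc_mod A (n:ℤ) (q:ℤ) hqn q
  have hd3 : (q:ℤ) ∣ A ^ (q+1) := by
    have hAe : A ^ (q+1) = ((n:ℤ) + (n:ℤ) ^ q - M) - (luc A (n:ℤ) (q+1) - A ^ (q+1)) := by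
      rw [hMdef]; ring
    rw [hAe]
    exact dvd_sub (dvd_sub (dvd_add hqn (dvd_pow hqn hq.ne_zero)) hd1) hd2
  exact hqA ((Nat.prime_iff_prime_int.mp hq).dvd_of_dvd_pow hd3)


/-- Let `D` be a `(v,k,λ)` difference set of order `n = k - λ` in a finite abelian
group `G`, and `q` a prime dividing `n` with `gcd(q,v) = 1`. Suppose the nontrivial
character values of `D` lie in `{√n, a, ā}` with `a` a non-real algebraic integer of
an imaginary quadratic field `ℚ(√d)` (`d < 0` squarefree), `a·ā = n`, and suppose the
integer `Δ = 2√n - (a + ā)` divides `v`. Then `σ_q` fixes `a` and `ā` (i.e. raising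
character values to `q`-th powers fixes them), and consequently `D^{(q)} = D`, i.e.
`q` is a multiplier of `D`. -/
theorem multiplier_theorem {G : Type*} [CommGroup G] [Fintype G] [DecidableEq G]
    (D : Finset G) (v k lam n : ℕ) (hv : Fintype.card G = v)
    (hk : D.card = k) (hDS : IsDiffSet D lam) (hlk : lam < k) (hn : n = k - lam)
    (q : ℕ) (hq : q.Prime) (hqn : q ∣ n) (hqv : Nat.Coprime q v)
    (r : ℕ) (hr : r ^ 2 = n)
    (d : ℤ) (hd : Squarefree d) (hdneg : d < 0)
    (a : ℂ) (hint : IsIntegral ℤ a)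
    (hmem : a ∈ Algebra.adjoin ℚ ({Complex.I * Real.sqrt (-d : ℤ)} : Set ℂ))
    (ha : a * (starRingEnd ℂ) a = (n : ℂ)) (haa : a ≠ (starRingEnd ℂ) a)
    (hvals : ∀ χ : G →* ℂ, χ ≠ 1 →
      (∑ d' ∈ D, χ d') ∈ ({(r : ℂ), a, (starRingEnd ℂ) a} : Set ℂ))
    (A : ℤ) (hA : (A : ℂ) = a + (starRingEnd ℂ) a)
    (hΔ : (2 * (r : ℤ) - A) ∣ (v : ℤ)) :
    (∀ χ : G →* ℂ,
      ((∑ d' ∈ D, χ d') = a → (∑ d' ∈ D, χ d' ^ q) = a) ∧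
      ((∑ d' ∈ D, χ d') = (starRingEnd ℂ) a →
        (∑ d' ∈ D, χ d' ^ q) = (starRingEnd ℂ) a)) ∧
      D.image (· ^ q) = D := by
  classical
  have hv0 : 0 < v := hv ▸ Fintype.card_pos
  have hqn' : (q:ℤ) ∣ (n:ℤ) := Int.natCast_dvd_natCast.mpr hqn
  have hqr : (q:ℤ) ∣ (r:ℤ) := by
    have h1 : q ∣ r := hq.dvd_of_dvd_pow (n := 2) (by rw [hr]; exact hqn)
    exact_mod_cast h1
  have hqA : ¬ (q:ℤ) ∣ A := by
    intro hA'
    have h1 : (q:ℤ) ∣ 2 * (r:ℤ) - A := dvd_sub (hqr.mul_left 2) hA'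
    have h2 : (q:ℤ) ∣ (v:ℤ) := h1.trans hΔ
    exact hq.ne_one (hqv.eq_one_of_dvd (Int.natCast_dvd_natCast.mp h2))
  have hL : ∀ m, (luc A (n:ℤ) m : ℂ) = a ^ m + (starRingEnd ℂ) a ^ m :=
    luc_complex A (n:ℤ) a _ hA.symm (by push_cast; exact ha)
  have hA2 : (A:ℂ) = (starRingEnd ℂ) a + (starRingEnd ℂ) ((starRingEnd ℂ) a) := by
    rw [Complex.conj_conj, hA]; ring
  have ha2 : (starRingEnd ℂ) a * (starRingEnd ℂ) ((starRingEnd ℂ) a) = (n:ℂ) := by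
    rw [Complex.conj_conj, mul_comm]; exact ha
  have hL2 : ∀ m, (luc A (n:ℤ) m : ℂ)
      = (starRingEnd ℂ) a ^ m + (starRingEnd ℂ) ((starRingEnd ℂ) a) ^ m := by
    intro m; rw [Complex.conj_conj, hL m]; ring
  -- the key claim: raising character values to the `q`-th power fixes all character sums
  have hmain : ∀ χ : G →* ℂ, (∑ d' ∈ D, χ d' ^ q) = ∑ d' ∈ D, χ d' := by
    intro χ
    by_cases hχ : χ = 1
    · subst hχ; simp
    · have hroot : ∀ g : G, (χ g) ^ v = 1 := by
        intro g
        rw [← map_pow, ← hv, pow_card_eq_one, map_one]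
      have hχq : χ ^ q ≠ 1 := by
        intro hcon
        apply hχ
        ext g
        have h1 : χ g ^ q = 1 := by
          have h := DFunLike.congr_fun hcon g
          simpa using h
        have h2 : orderOf (χ g) ∣ Nat.gcd q v :=
          Nat.dvd_gcd (orderOf_dvd_of_pow_eq_one h1) (orderOf_dvd_of_pow_eq_one (hroot g))
        rw [hqv] at h2
        simpa using orderOf_eq_one_iff.mp (Nat.dvd_one.mp h2)
      have hS := hvals χ hχ
      have hS' := hvals (χ ^ q) hχq
      have hSq : (∑ d' ∈ D, (χ ^ q) d') = ∑ d' ∈ D, χ d' ^ q := by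
        simp [MonoidHom.pow_apply]
      rw [hSq] at hS'
      have hintvals : ∀ i ∈ D, IsIntegral ℤ (χ i) := fun i _ =>
        ⟨Polynomial.X ^ v - Polynomial.C 1, Polynomial.monic_X_pow_sub_C _ hv0.ne',
          by simp [hroot i]⟩
      obtain ⟨w, hw, hfrob⟩ := exists_int_sum_pow_prime q hq D (fun d' => χ d') hintvals
      simp only [Set.mem_insert_iff, Set.mem_singleton_iff] at hS hS'
      rcases hS with h | h | h <;> rcases hS' with h' | h' | h' <;> rw [h', h] <;>
          rw [h, h'] at hfrob
      · -- S = r, S' = a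
        exfalso
        exact caseR2 q hq r A a (-w) hw.neg hA hqr hqA (by linear_combination -hfrob)
      · -- S = r, S' = ā
        exfalso
        exact caseR2 q hq r A ((starRingEnd ℂ) a) (-w) hw.neg hA2 hqr hqA
          (by linear_combination -hfrob)
      · -- S = a, S' = r
        exfalso
        exact caseR q hq n r A a (-w) hw.neg hqn' hqr hqA hL (by linear_combination -hfrob)
      · -- S = a, S' = ā
        exfalso
        exact caseCross q hq n A a (-w) hw.neg hint ha hqn' hqA hL
          (by linear_combination -hfrob)
      · -- S = ā, S' = r
        exfalso
        exact caseR q hq n r A ((starRingEnd ℂ) a) (-w) hw.neg hqn' hqr hqA hL2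
          (by linear_combination -hfrob)
      · -- S = ā, S' = a
        exfalso
        exact caseCross q hq n A ((starRingEnd ℂ) a) (-w) hw.neg (conj_int hint) ha2 hqn' hqA hL2
          (by rw [Complex.conj_conj]; linear_combination -hfrob)
  refine ⟨fun χ => ⟨fun h => by rw [hmain χ, h], fun h => by rw [hmain χ, h]⟩, ?_⟩
  -- Part 2: Fourier inversion
  have hcop : (Nat.card G).Coprime q := by
    rw [Nat.card_eq_fintype_card, hv]; exact hqv.symm
  have hinj : Function.Injective (fun g : G => g ^ q) := (powCoprime hcop).injective
  haveI : NeZero (Monoid.exponent G) := ⟨Monoid.exponent_ne_zero_of_finite⟩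
  obtain ⟨e⟩ := CommGroup.monoidHom_mulEquiv_of_hasEnoughRootsOfUnity G ℂ
  haveI : Finite (G →* ℂˣ) := Finite.of_equiv G e.symm.toEquiv
  haveI : Fintype (G →* ℂˣ) := Fintype.ofFinite _
  haveI : Nonempty (G →* ℂˣ) := ⟨1⟩
  have horth : ∀ g : G, (∑ ψ : G →* ℂˣ, ((ψ g : ℂˣ) : ℂ)) =
      if g = 1 then (Fintype.card (G →* ℂˣ) : ℂ) else 0 := by
    intro g
    by_cases hg : g = 1
    · simp [hg]
    · rw [if_neg hg]
      obtain ⟨ψ₀, hψ₀⟩ := CommGroup.exists_apply_ne_one_of_hasEnoughRootsOfUnity G ℂ hg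
      have hshift := Equiv.sum_comp (Equiv.mulLeft ψ₀) (fun ψ : G →* ℂˣ => ((ψ g : ℂˣ) : ℂ))
      simp only [Equiv.coe_mulLeft, MonoidHom.mul_apply, Units.val_mul] at hshift
      rw [← Finset.mul_sum] at hshift
      have hz : (((ψ₀ g : ℂˣ) : ℂ) - 1) * (∑ ψ : G →* ℂˣ, ((ψ g : ℂˣ) : ℂ)) = 0 := by
        rw [sub_mul, one_mul]
        exact sub_eq_zero.mpr hshift
      rcases mul_eq_zero.mp hz with h | h
      · exact absurd (Units.ext (by simpa using sub_eq_zero.mp h)) hψ₀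
      · exact h
  have hkey : ∀ (E : Finset G) (g : G),
      (∑ ψ : G →* ℂˣ, (∑ x ∈ E, ((ψ x : ℂˣ) : ℂ)) * ((ψ g⁻¹ : ℂˣ) : ℂ))
        = if g ∈ E then (Fintype.card (G →* ℂˣ) : ℂ) else 0 := by
    intro E g
    have h1 : ∀ ψ : G →* ℂˣ, (∑ x ∈ E, ((ψ x : ℂˣ) : ℂ)) * ((ψ g⁻¹ : ℂˣ) : ℂ)
        = ∑ x ∈ E, ((ψ (x * g⁻¹) : ℂˣ) : ℂ) := by
      intro ψ
      rw [Finset.sum_mul]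
      exact Finset.sum_congr rfl (fun x _ => by rw [map_mul, Units.val_mul])
    rw [Finset.sum_congr rfl (fun ψ _ => h1 ψ), Finset.sum_comm]
    have h2 : ∀ x ∈ E, (∑ ψ : G →* ℂˣ, ((ψ (x * g⁻¹) : ℂˣ) : ℂ))
        = if x = g then (Fintype.card (G →* ℂˣ) : ℂ) else 0 := by
      intro x _
      rw [horth (x * g⁻¹)]
      simp only [mul_inv_eq_one]
    rw [Finset.sum_congr rfl h2, Finset.sum_ite_eq' E g (fun _ => (Fintype.card (G →* ℂˣ) : ℂ))]
  have heqsum : ∀ ψ : G →* ℂˣ, (∑ x ∈ D.image (· ^ q), ((ψ x : ℂˣ) : ℂ))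
      = ∑ x ∈ D, ((ψ x : ℂˣ) : ℂ) := by
    intro ψ
    rw [Finset.sum_image (fun x _ y _ h => hinj h)]
    have h := hmain ((Units.coeHom ℂ).comp ψ)
    simp only [MonoidHom.coe_comp, Function.comp_apply, Units.coeHom_apply] at h
    calc (∑ x ∈ D, ((ψ (x ^ q) : ℂˣ) : ℂ)) = ∑ x ∈ D, ((ψ x : ℂˣ) : ℂ) ^ q :=
          Finset.sum_congr rfl (fun x _ => by rw [map_pow, Units.val_pow_eq_pow_val])
      _ = ∑ x ∈ D, ((ψ x : ℂˣ) : ℂ) := h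
  have hcard : (Fintype.card (G →* ℂˣ) : ℂ) ≠ 0 := by
    exact_mod_cast (Fintype.card_pos (α := G →* ℂˣ)).ne'
  ext g
  have h1 := hkey (D.image (· ^ q)) g
  have h2 := hkey D g
  rw [Finset.sum_congr rfl (fun ψ _ => by rw [heqsum ψ])] at h1
  have h3 := h1.symm.trans h2
  by_cases hm1 : g ∈ D.image (· ^ q)
  · rw [if_pos hm1] at h3
    by_cases hm2 : g ∈ D
    · exact iff_of_true hm1 hm2
    · rw [if_neg hm2] at h3; exact absurd h3 hcard
  · rw [if_neg hm1] at h3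
    by_cases hm2 : g ∈ D
    · rw [if_pos hm2] at h3; exact absurd h3.symm hcard
    · exact iff_of_false hm1 hm2
end

section
/- Let D be a Hadamard difference set with parameters (v,k,λ) = (4n, 2n + √n, n + √n) in an abelian group G, with nontrivial character values √n, i√n, -i√n. Let H = D + D^{(-1)} - G (as group ring element). Then H is (the indicator of) a subgroup of G of order 2√n, H² = 2√n·H, H = H^{(-1)}, and the annihilator H^⊥ equals {χ₀} ∪ {χ ∈ Ĝ : χ(D) = √n}. Moreover G must be a 2-group, n = 2^{2m-2} for some m, and (v,k,λ) = (2^{2m}, 2^{2m-1} + 2^{m-1}, 2^{2m-2} + 2^{m-1}). -/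
set_option linter.unusedSectionVars false
set_option maxHeartbeats 1000000

open Finset

section AuxChar

variable {G : Type*} [CommGroup G] [Fintype G]

lemma aux_sum_char_eq_zero {χ : G →* ℂ} (h : χ ≠ 1) : ∑ g : G, χ g = 0 := by
  obtain ⟨h₀, hh⟩ : ∃ x : G, χ x ≠ 1 := by
    by_contra hc
    push_neg at hc
    exact h (MonoidHom.ext fun x => (hc x).trans rfl)
  have key : χ h₀ * ∑ g : G, χ g = ∑ g : G, χ g := by
    rw [Finset.mul_sum]
    exact Fintype.sum_bijective (fun g => h₀ * g) (Group.mulLeft_bijective h₀) _ _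
      (fun g => (map_mul χ h₀ g).symm)
  have : (χ h₀ - 1) * ∑ g : G, χ g = 0 := by ring_nf; linear_combination key
  rcases mul_eq_zero.mp this with h' | h'
  · exact absurd (by linear_combination h') hh
  · exact h'

lemma aux_exists_char {a : G} (ha : a ≠ 1) : ∃ χ : G →* ℂ, χ a ≠ 1 := by
  haveI : NeZero (Monoid.exponent G) := ⟨Monoid.exponent_ne_zero_of_finite⟩
  haveI : NeZero ((Monoid.exponent G : ℕ) : ℂ) :=
    ⟨by exact_mod_cast (Nat.cast_ne_zero (R := ℂ)).mpr (NeZero.ne (Monoid.exponent G))⟩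
  obtain ⟨φ, hφ⟩ := CommGroup.exists_apply_ne_one_of_hasEnoughRootsOfUnity G ℂ ha
  refine ⟨(Units.coeHom ℂ).comp φ, fun hc => hφ (Units.ext ?_)⟩
  simpa using hc

lemma aux_char_ne_zero (χ : G →* ℂ) (g : G) : χ g ≠ 0 := by
  intro h
  have : χ g * χ g⁻¹ = 1 := by rw [← map_mul, mul_inv_cancel, map_one]
  rw [h, zero_mul] at this
  exact zero_ne_one this

lemma aux_char_abs (χ : G →* ℂ) (g : G) : ‖χ g‖ = 1 := by
  have hp : χ g ^ Fintype.card G = 1 := by rw [← map_pow, pow_card_eq_one, map_one]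
  have h1 : ‖χ g‖ ^ Fintype.card G = 1 := by
    rw [← norm_pow, hp, norm_one]
  have hpos : (0:ℝ) ≤ ‖χ g‖ := norm_nonneg _
  rcases lt_trichotomy (‖χ g‖) 1 with h | h | h
  · exact absurd h1 (by
      have := pow_lt_one₀ hpos h (Fintype.card_ne_zero (α := G))
      linarith)
  · exact h
  · exact absurd h1 (by
      have := one_lt_pow₀ h (Fintype.card_ne_zero (α := G))
      linarith)

lemma aux_char_conj (χ : G →* ℂ) (g : G) :
    (starRingEnd ℂ) (χ g) = χ g⁻¹ := by
  have habs : χ g * (starRingEnd ℂ) (χ g) = 1 := by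
    rw [Complex.mul_conj, ← Complex.sq_norm, aux_char_abs]
    norm_num
  have hinv : χ g * χ g⁻¹ = 1 := by rw [← map_mul, mul_inv_cancel, map_one]
  have : χ g⁻¹ = (χ g)⁻¹ := eq_inv_of_mul_eq_one_right hinv
  rw [this]
  exact eq_inv_of_mul_eq_one_right habs

lemma aux_fourier_inj (f : G → ℂ) (hf : ∀ χ : G →* ℂ, ∑ g : G, f g * χ g = 0)
    (g₀ : G) : f g₀ = 0 := by
  classical
  set V : Submodule ℂ (G → ℂ) := Submodule.span ℂ (Set.range fun χ : G →* ℂ => ⇑χ) with hV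
  have hmul : ∀ (χ : G →* ℂ) (u : G → ℂ), u ∈ V → (⇑χ * u) ∈ V := by
    intro χ u hu
    induction hu using Submodule.span_induction with
    | mem x hx =>
        obtain ⟨ψ, rfl⟩ := hx
        exact Submodule.subset_span ⟨χ * ψ, by ext g; simp [mul_comm]⟩
    | zero => simpa using (Submodule.zero_mem V)
    | add x y _ _ hx hy => simpa [mul_add] using Submodule.add_mem V hx hy
    | smul c x _ hx => simpa [mul_smul_comm] using Submodule.smul_mem V c hx
  have key : ∀ T : Finset G, ∃ u, u ∈ V ∧ u g₀ = 1 ∧ ∀ y ∈ T, y ≠ g₀ → u y = 0 := by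
    intro T
    induction T using Finset.induction_on with
    | empty =>
        exact ⟨⇑(1 : G →* ℂ), Submodule.subset_span ⟨1, rfl⟩, rfl, by simp⟩
    | @insert y T' hy ih =>
        obtain ⟨u, huV, hu1, hu0⟩ := ih
        by_cases hyg : y = g₀
        · exact ⟨u, huV, hu1, by
            intro z hz hzg
            rcases Finset.mem_insert.mp hz with rfl | hz'
            · exact absurd hyg hzg
            · exact hu0 z hz' hzg⟩
        · obtain ⟨χ, hχ⟩ := aux_exists_char (a := y * g₀⁻¹) (by
            intro h; exact hyg (by rwa [mul_inv_eq_one] at h))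
          have hne : χ y ≠ χ g₀ := by
            intro h
            apply hχ
            rw [map_mul, map_inv, h]
            exact mul_inv_cancel₀ (aux_char_ne_zero χ g₀)
          set c := χ y with hc
          refine ⟨(χ g₀ - c)⁻¹ • (⇑χ * u - c • u), ?_, ?_, ?_⟩
          · exact Submodule.smul_mem V _ (Submodule.sub_mem V (hmul χ u huV)
              (Submodule.smul_mem V c huV))
          · have hne0 : χ g₀ - c ≠ 0 := sub_ne_zero.mpr (Ne.symm hne)
            show (χ g₀ - c)⁻¹ * ((χ g₀) * u g₀ - c * u g₀) = 1
            rw [hu1]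
            field_simp
          · intro z hz hzg
            rcases Finset.mem_insert.mp hz with rfl | hz'
            · show (χ g₀ - c)⁻¹ * ((χ z) * u z - c * u z) = 0
              rw [← hc]
              ring
            · simp [hu0 z hz' hzg]
  obtain ⟨u, huV, hu1, hu0⟩ := key Finset.univ
  have hvan : ∀ u ∈ V, ∑ g : G, f g * u g = 0 := by
    intro u hu
    induction hu using Submodule.span_induction with
    | mem x hx => obtain ⟨ψ, rfl⟩ := hx; exact hf ψ
    | zero => simp
    | add x y _ _ hx hy => simp [mul_add, Finset.sum_add_distrib, hx, hy]
    | smul c x _ hx =>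
        have : ∑ g : G, f g * (c • x) g = c * ∑ g : G, f g * x g := by
          rw [Finset.mul_sum]
          exact Finset.sum_congr rfl fun g _ => by simp only [Pi.smul_apply, smul_eq_mul]; ring
        rw [this, hx, mul_zero]
  have := hvan u huV
  rw [Finset.sum_eq_single g₀ (fun b _ hb => by rw [hu0 b (Finset.mem_univ b) hb, mul_zero])
    (fun h => absurd (Finset.mem_univ g₀) h)] at this
  rwa [hu1, mul_one] at this

lemma aux_forcing (T : Finset G) (χ : G →* ℂ) (h : ∑ g ∈ T, χ g = (T.card : ℂ)) :
    ∀ g ∈ T, χ g = 1 := by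
  have hre : ∑ g ∈ T, (1 - (χ g).re) = 0 := by
    have h2 := congrArg Complex.re h
    rw [Complex.re_sum] at h2
    simp only [Complex.natCast_re] at h2
    rw [Finset.sum_sub_distrib, h2]
    simp
  have hnn : ∀ g ∈ T, 0 ≤ 1 - (χ g).re := by
    intro g _
    have := Complex.re_le_norm (χ g)
    rw [aux_char_abs] at this
    linarith
  have heach := (Finset.sum_eq_zero_iff_of_nonneg hnn).mp hre
  intro g hg
  have hre1 : (χ g).re = 1 := by have := heach g hg; linarith
  have habs : ‖χ g‖ = 1 := aux_char_abs χ g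
  have hnsq : Complex.normSq (χ g) = 1 := by
    rw [← Complex.sq_norm, habs]; norm_num
  have him : (χ g).im = 0 := by
    have : (χ g).re ^ 2 + (χ g).im ^ 2 = 1 := by
      have := Complex.normSq_apply (χ g)
      nlinarith [hnsq]
    nlinarith [sq_nonneg (χ g).im]
  exact Complex.ext (by simp [hre1]) (by simp [him])

end AuxChar

section AuxCyclotomic

open IntermediateField Polynomial

lemma aux_I_primitive : IsPrimitiveRoot Complex.I 4 := by
  rw [IsPrimitiveRoot.iff_def]
  constructor
  · norm_num [pow_succ, Complex.I_mul_I]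
  · intro l hl
    have h4 : Complex.I ^ 4 = 1 := by norm_num [pow_succ, Complex.I_mul_I]
    have : Complex.I ^ (l % 4) = 1 := by
      conv at hl => rw [← Nat.div_add_mod l 4]
      rwa [pow_add, pow_mul, h4, one_pow, one_mul] at hl
    have hlt : l % 4 < 4 := Nat.mod_lt _ (by norm_num)
    interval_cases h : l % 4
    · omega
    · simp only [pow_one] at this
      exact absurd (congrArg Complex.re this) (by norm_num)
    · rw [pow_two, Complex.I_mul_I] at this
      exact absurd this (by intro h; have := congrArg Complex.re h; norm_num at this)
    · rw [pow_succ, pow_two, Complex.I_mul_I, neg_one_mul] at this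
      exact absurd this (by
        intro h; have := congrArg Complex.im h; simp at this)

lemma aux_no_I {w : ℕ} (hw : ¬ 2 ∣ w) (hw0 : 0 < w) {ι : Type*} (s : Finset ι)
    (F : ι → ℂ) (hF : ∀ i ∈ s, (F i) ^ w = 1) (q : ℚ) (hq : q ≠ 0) :
    ∑ i ∈ s, F i ≠ Complex.I * (q : ℂ) := by
  intro hsum
  haveI : NeZero w := ⟨hw0.ne'⟩
  set ζ : ℂ := Complex.exp (2 * Real.pi * Complex.I / w) with hζdef
  have hζ : IsPrimitiveRoot ζ w := Complex.isPrimitiveRoot_exp w hw0.ne'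
  set K : IntermediateField ℚ ℂ := ℚ⟮ζ⟯ with hK
  have hζK : ζ ∈ K := IntermediateField.mem_adjoin_simple_self ℚ ζ
  have hFK : ∀ i ∈ s, F i ∈ K := by
    intro i hi
    obtain ⟨j, _, hj⟩ := hζ.eq_pow_of_pow_eq_one (hF i hi)
    rw [← hj]
    exact pow_mem hζK j
  have hsK : (∑ i ∈ s, F i) ∈ K := sum_mem fun i hi => hFK i hi
  have hqK : (q : ℂ) ∈ K := by
    have := IntermediateField.algebraMap_mem K q
    rwa [show (algebraMap ℚ ℂ) q = (q : ℂ) by simp] at this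
  have hIK : Complex.I ∈ K := by
    have hqc : (q : ℂ) ≠ 0 := by exact_mod_cast hq
    have : Complex.I = (∑ i ∈ s, F i) * ((q : ℂ))⁻¹ := by
      rw [hsum]; field_simp
    rw [this]
    exact mul_mem hsK (inv_mem hqK)
  have hint : IsIntegral ℚ ζ := (hζ.isIntegral hw0).tower_top
  haveI : FiniteDimensional ℚ K := IntermediateField.adjoin.finiteDimensional hint
  have hζ' : IsPrimitiveRoot (⟨ζ, hζK⟩ : K) w :=
    IsPrimitiveRoot.coe_submonoidClass_iff.mp hζ
  have hI' : IsPrimitiveRoot (⟨Complex.I, hIK⟩ : K) 4 :=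
    IsPrimitiveRoot.coe_submonoidClass_iff.mp aux_I_primitive
  have hcop : Nat.Coprime w 4 := by
    have h2 : Nat.Coprime 2 w := (Nat.prime_two.coprime_iff_not_dvd).mpr hw
    have : Nat.Coprime (2 ^ 2) w := h2.pow_left 2
    exact (by norm_num at this ⊢; exact this.symm)
  have hlcm0 : Nat.lcm w 4 ≠ 0 := Nat.lcm_ne_zero hw0.ne' (by norm_num)
  have hirr : Irreducible (cyclotomic (Nat.lcm w 4) ℚ) :=
    Polynomial.cyclotomic.irreducible_rat (Nat.pos_of_ne_zero hlcm0)
  have hle := IsPrimitiveRoot.lcm_totient_le_finrank hζ' hI' hirr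
  have hrank : Module.finrank ℚ K = w.totient := by
    rw [IntermediateField.adjoin.finrank hint,
      ← hζ.minpoly_eq_cyclotomic_of_irreducible (Polynomial.cyclotomic.irreducible_rat hw0),
      Polynomial.natDegree_cyclotomic]
  rw [hrank, Nat.Coprime.lcm_eq_mul hcop, Nat.totient_mul hcop] at hle
  have h4 : Nat.totient 4 = 2 := by decide
  rw [h4] at hle
  have hpos : 0 < w.totient := Nat.totient_pos.mpr hw0
  omega

end AuxCyclotomic

open scoped Classical in
/-- Let `D` be a Hadamard difference set with parameters `(4n, 2n+√n, n+√n)` in an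
abelian group `G`, with the three nontrivial character values `√n, i√n, -i√n`, and
`1 ∈ D`. Then `H = D + D^{(-1)} - G` is the indicator of a subgroup `S ≤ G` of order
`2√n`, `H² = 2√n·H`, `H = H^{(-1)}`, and the annihilator `S^⊥` equals
`{χ₀} ∪ {χ : χ(D) = √n}`. Moreover `G` is a `2`-group and
`(v,k,λ,n) = (2^{2m}, 2^{2m-1}+2^{m-1}, 2^{2m-2}+2^{m-1}, 2^{2m-2})` for some `m ≥ 1`. -/
theorem hadamard_plus_case {G : Type*} [CommGroup G] [Fintype G] [DecidableEq G]
    (D : Finset G) (v k lam n r : ℕ) (hr : r ^ 2 = n) (hrpos : 0 < r)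
    (hv : Fintype.card G = v) (hk : D.card = k) (hDS : IsDiffSet D lam)
    (hv4 : v = 4 * n) (hkn : k = 2 * n + r) (hlam : lam = n + r)
    (h1D : (1 : G) ∈ D)
    (hvals : {z : ℂ | ∃ χ : G →* ℂ, χ ≠ 1 ∧ ∑ d ∈ D, χ d = z}
      = {(r : ℂ), Complex.I * (r : ℂ), -(Complex.I * (r : ℂ))})
    (H : MonoidAlgebra ℤ G)
    (hH : H = (∑ d ∈ D, MonoidAlgebra.single d (1 : ℤ)) +
        (∑ d ∈ D, MonoidAlgebra.single d⁻¹ (1 : ℤ)) -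
        (∑ g : G, MonoidAlgebra.single g (1 : ℤ))) :
    (∃ S : Subgroup G,
      (∀ g : G, H.coeff g = if g ∈ S then (1 : ℤ) else 0) ∧
      Nat.card S = 2 * r ∧
      H ^ 2 = (2 * (r : ℤ)) • H ∧
      Finsupp.equivMapDomain (Equiv.inv G) H.coeff = H.coeff ∧
      {χ : G →* ℂ | ∀ h ∈ S, χ h = 1} =
        {χ : G →* ℂ | χ = 1 ∨ ∑ d ∈ D, χ d = (r : ℂ)}) ∧
    IsPGroup 2 G ∧
    ∃ m : ℕ, 0 < m ∧ v = 2 ^ (2 * m) ∧ k = 2 ^ (2 * m - 1) + 2 ^ (m - 1) ∧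
      lam = 2 ^ (2 * m - 2) + 2 ^ (m - 1) ∧ n = 2 ^ (2 * m - 2) := by
  classical
  -- coefficient formula for H
  have Hcoef : ∀ g : G,
      H.coeff g = (if g ∈ D then (1:ℤ) else 0) + (if g⁻¹ ∈ D then 1 else 0) - 1 := by
    intro g
    have e1 : ((∑ d ∈ D, MonoidAlgebra.single d (1 : ℤ)) : MonoidAlgebra ℤ G).coeff g
        = if g ∈ D then 1 else 0 := by
      rw [MonoidAlgebra.coeff_sum, Finset.sum_apply']
      simp only [MonoidAlgebra.coeff_single]
      simp only [Finsupp.single_apply]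
      simp [Finset.sum_ite_eq D g (fun _ => (1:ℤ))]
    have e2 : ((∑ d ∈ D, MonoidAlgebra.single d⁻¹ (1 : ℤ)) : MonoidAlgebra ℤ G).coeff g
        = if g⁻¹ ∈ D then 1 else 0 := by
      rw [MonoidAlgebra.coeff_sum, Finset.sum_apply']
      simp only [MonoidAlgebra.coeff_single]
      simp only [Finsupp.single_apply, inv_eq_iff_eq_inv]
      simp [Finset.sum_ite_eq' D g⁻¹ (fun _ => (1:ℤ))]
    have e3 : ((∑ g' : G, MonoidAlgebra.single g' (1 : ℤ)) : MonoidAlgebra ℤ G).coeff g = 1 := by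
      rw [MonoidAlgebra.coeff_sum, Finset.sum_apply']
      simp only [MonoidAlgebra.coeff_single]
      simp only [Finsupp.single_apply]
      simp [Finset.sum_ite_eq Finset.univ g (fun _ => (1:ℤ))]
    rw [hH, MonoidAlgebra.coeff_sub, MonoidAlgebra.coeff_add, Finsupp.sub_apply, Finsupp.add_apply, e1, e2, e3]
  have Hone : H.coeff 1 = 1 := by rw [Hcoef]; simp [h1D]
  have Hsymm : ∀ g : G, H.coeff g⁻¹ = H.coeff g := by
    intro g; rw [Hcoef, Hcoef, inv_inv]; ring
  -- the Fourier transform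
  set Φ : (G →* ℂ) → (MonoidAlgebra ℤ G →ₐ[ℤ] ℂ) :=
    fun χ => MonoidAlgebra.lift ℤ ℂ G χ with hΦdef
  have Φsingle : ∀ (χ : G →* ℂ) (g : G), Φ χ (MonoidAlgebra.single g (1:ℤ)) = χ g := by
    intro χ g
    rw [hΦdef]
    simp [MonoidAlgebra.lift_single]
  have ΦH : ∀ χ : G →* ℂ,
      Φ χ H = (∑ d ∈ D, χ d) + (∑ d ∈ D, χ d⁻¹) - (∑ g : G, χ g) := by
    intro χ
    rw [hH, map_sub, map_add, map_sum, map_sum, map_sum]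
    simp [Φsingle]
  have Φcoef : ∀ (χ : G →* ℂ) (x : MonoidAlgebra ℤ G),
      Φ χ x = ∑ g : G, ((x.coeff g : ℤ) : ℂ) * χ g := by
    intro χ x
    rw [hΦdef]
    show (MonoidAlgebra.lift ℤ ℂ G χ) x = _
    rw [MonoidAlgebra.lift_apply]
    rw [Finsupp.sum_fintype _ _ (fun a => by simp)]
    exact Finset.sum_congr rfl fun g _ => by
      rw [zsmul_eq_mul]
  have conjsum : ∀ χ : G →* ℂ,
      (∑ d ∈ D, χ d⁻¹) = (starRingEnd ℂ) (∑ d ∈ D, χ d) := by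
    intro χ
    rw [map_sum]
    exact Finset.sum_congr rfl fun d _ => (aux_char_conj χ d).symm
  -- cast facts
  have hkC : (D.card : ℂ) = 2*(r:ℂ)^2 + r := by
    rw [hk, hkn, ← hr]; push_cast; ring
  have hvC : ((Fintype.card G : ℕ) : ℂ) = 4*(r:ℂ)^2 := by
    rw [hv, hv4, ← hr]; push_cast; ring
  -- value of the transform at the trivial character
  have Φtriv : Φ 1 H = 2*(r:ℂ) := by
    rw [ΦH]
    simp only [MonoidHom.one_apply, Finset.sum_const, nsmul_eq_mul, mul_one, Finset.card_univ]
    rw [hkC, hvC]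
    ring
  -- value trichotomy for nontrivial characters
  have tri : ∀ χ : G →* ℂ, χ ≠ 1 →
      (∑ d ∈ D, χ d) = r ∨ (∑ d ∈ D, χ d) = Complex.I * r ∨
      (∑ d ∈ D, χ d) = -(Complex.I * r) := by
    intro χ hχ
    have : (∑ d ∈ D, χ d) ∈
        ({(r : ℂ), Complex.I * (r : ℂ), -(Complex.I * (r : ℂ))} : Set ℂ) := by
      rw [← hvals]; exact ⟨χ, hχ, rfl⟩
    simpa [Set.mem_insert_iff] using this
  have ΦHval1 : ∀ χ : G →* ℂ, (χ = 1 ∨ (∑ d ∈ D, χ d) = r) → Φ χ H = 2*(r:ℂ) := by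
    intro χ h
    by_cases hχ : χ = 1
    · rw [hχ]; exact Φtriv
    · rcases h with h|h
      · exact absurd h hχ
      · rw [ΦH, conjsum, h, aux_sum_char_eq_zero hχ, map_natCast]
        ring
  have ΦHval2 : ∀ χ : G →* ℂ, χ ≠ 1 →
      ((∑ d ∈ D, χ d) = Complex.I * r ∨ (∑ d ∈ D, χ d) = -(Complex.I * r)) →
      Φ χ H = 0 := by
    intro χ hχ h
    rcases h with h|h <;>
    · rw [ΦH, conjsum, h, aux_sum_char_eq_zero hχ]
      simp only [map_mul, map_neg, Complex.conj_I, map_natCast]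
      ring
  -- H² = 2r·H
  have Hsq : H^2 = (2*(r:ℤ)) • H := by
    have key : ∀ χ : G →* ℂ, Φ χ (H^2 - (2*(r:ℤ)) • H) = 0 := by
      intro χ
      rw [map_sub, map_pow, map_zsmul]
      have : ∀ z : ℂ, z = 2*(r:ℂ) ∨ z = 0 → z^2 - (2*(r:ℤ)) • z = 0 := by
        intro z hz
        rcases hz with rfl|rfl <;> simp [zsmul_eq_mul] <;> push_cast <;> ring
      apply this
      by_cases hχ : χ = 1
      · exact Or.inl (ΦHval1 χ (Or.inl hχ))
      · rcases tri χ hχ with h|h|h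
        · exact Or.inl (ΦHval1 χ (Or.inr h))
        · exact Or.inr (ΦHval2 χ hχ (Or.inl h))
        · exact Or.inr (ΦHval2 χ hχ (Or.inr h))
    have allc : ∀ g : G, (H^2 - (2*(r:ℤ)) • H).coeff g = 0 := by
      intro g
      have hf : ∀ χ : G →* ℂ,
          ∑ g : G, ((((H^2 - (2*(r:ℤ))•H).coeff g : ℤ) : ℂ)) * χ g = 0 := fun χ => by
        rw [← Φcoef]; exact key χ
      have := aux_fourier_inj _ hf g
      exact_mod_cast this
    have h0 : H^2 - (2*(r:ℤ))•H = 0 := MonoidAlgebra.coeff_injective (Finsupp.ext fun g => allc g)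
    linear_combination (norm := module) h0
  -- sum of coefficients of H
  have sumH : ∑ g : G, H.coeff g = 2*(r:ℤ) := by
    have h1 := Φtriv
    rw [Φcoef] at h1
    simp only [MonoidHom.one_apply, mul_one] at h1
    exact_mod_cast h1
  -- coefficients of the product
  have mulcoef : ∀ x : G, (H * H).coeff x = ∑ a : G, H.coeff a * H.coeff (a⁻¹ * x) := by
    intro x
    rw [MonoidAlgebra.coeff_mul]
    rw [Finsupp.sum_fintype _ _ (fun a => by simp)]
    refine Finset.sum_congr rfl fun a _ => ?_
    rw [Finsupp.sum_fintype _ _ (fun b => by simp)]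
    rw [Finset.sum_eq_single (a⁻¹*x)]
    · simp [mul_inv_cancel_left]
    · intro b _ hb
      rw [if_neg]
      intro h
      exact hb (by rw [← h]; group)
    · intro h
      exact absurd (Finset.mem_univ _) h
  have sumHsq : ∑ g : G, H.coeff g * H.coeff g = 2*(r:ℤ) := by
    have h1 : (H*H).coeff 1 = 2*(r:ℤ) := by
      rw [← sq, Hsq, MonoidAlgebra.coeff_smul, Finsupp.smul_apply, Hone, smul_eq_mul, mul_one]
    rw [mulcoef 1] at h1
    rw [← h1]
    exact Finset.sum_congr rfl fun a _ => by rw [mul_one, Hsymm]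
  -- coefficients are 0 or 1
  have H01 : ∀ g : G, H.coeff g = 0 ∨ H.coeff g = 1 := by
    have hz : ∑ g : G, (H.coeff g * H.coeff g - H.coeff g) = 0 := by
      rw [Finset.sum_sub_distrib, sumHsq, sumH, sub_self]
    have hnn : ∀ g ∈ Finset.univ, (0:ℤ) ≤ H.coeff g * H.coeff g - H.coeff g := by
      intro g _
      rcases le_or_gt (H.coeff g) 0 with h|h
      · nlinarith [mul_self_nonneg (H.coeff g)]
      · have : 1 ≤ H.coeff g := h
        nlinarith
    have heach := (Finset.sum_eq_zero_iff_of_nonneg hnn).mp hz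
    intro g
    have hg := heach g (Finset.mem_univ g)
    have hfac : H.coeff g * (H.coeff g - 1) = 0 := by linear_combination hg
    rcases mul_eq_zero.mp hfac with h|h
    · exact Or.inl h
    · exact Or.inr (by linarith)
  have Hnn : ∀ g : G, (0:ℤ) ≤ H.coeff g := by
    intro g; rcases H01 g with h|h <;> rw [h] <;> norm_num
  -- the subgroup S
  have mul_mem_aux : ∀ a b : G, H.coeff a = 1 → H.coeff b = 1 → H.coeff (a*b) = 1 := by
    intro a b ha hb
    have h2 : (2*(r:ℤ)) * H.coeff (a*b) = ∑ x : G, H.coeff x * H.coeff (x⁻¹*(a*b)) := by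
      rw [← mulcoef, ← sq, Hsq, MonoidAlgebra.coeff_smul, Finsupp.smul_apply, smul_eq_mul]
    have hterm : H.coeff a * H.coeff (a⁻¹*(a*b)) = 1 := by
      rw [inv_mul_cancel_left, ha, hb, mul_one]
    have hpos : (1:ℤ) ≤ ∑ x : G, H.coeff x * H.coeff (x⁻¹*(a*b)) := by
      rw [← hterm]
      exact Finset.single_le_sum (f := fun x => H.coeff x * H.coeff (x⁻¹*(a*b)))
        (fun x _ => mul_nonneg (Hnn x) (Hnn _)) (Finset.mem_univ a)
    rcases H01 (a*b) with h|h
    · rw [h, mul_zero] at h2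
      omega
    · exact h
  let S : Subgroup G :=
    { carrier := {g | H.coeff g = 1}
      one_mem' := Hone
      inv_mem' := fun {g} hg => by
        show H.coeff g⁻¹ = 1
        rw [Hsymm]; exact hg
      mul_mem' := fun {a b} ha hb => mul_mem_aux a b ha hb }
  have memS : ∀ g : G, g ∈ S ↔ H.coeff g = 1 := fun g => Iff.rfl
  have hindS : ∀ g : G, H.coeff g = if g ∈ S then (1:ℤ) else 0 := by
    intro g
    by_cases hg : g ∈ S
    · rw [if_pos hg]; exact (memS g).mp hg
    · rw [if_neg hg]
      rcases H01 g with h|h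
      · exact h
      · exact absurd ((memS g).mpr h) hg
  -- cardinality of S
  have hfilter : (∑ g : G, if g ∈ S then (1:ℤ) else 0)
      = ((Finset.univ.filter (· ∈ S)).card : ℤ) := by
    rw [Finset.sum_boole]
  have hcardfilter : (Finset.univ.filter (· ∈ S)).card = 2*r := by
    have h1 : ∑ g : G, H.coeff g = (∑ g : G, if g ∈ S then (1:ℤ) else 0) :=
      Finset.sum_congr rfl fun g _ => by rw [hindS]
    rw [sumH, hfilter] at h1
    exact_mod_cast h1.symm
  have cardS : Nat.card S = 2*r := by
    rw [Nat.card_eq_fintype_card]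
    rw [Fintype.card_subtype]
    exact hcardfilter
  -- transform of H as a sum over S
  have ΦHS : ∀ χ : G →* ℂ, Φ χ H = ∑ g ∈ Finset.univ.filter (· ∈ S), χ g := by
    intro χ
    rw [Φcoef, Finset.sum_filter]
    refine Finset.sum_congr rfl fun g _ => ?_
    rw [hindS g]
    split_ifs <;> simp
  -- the annihilator identity
  have hann : {χ : G →* ℂ | ∀ h ∈ S, χ h = 1} =
      {χ : G →* ℂ | χ = 1 ∨ ∑ d ∈ D, χ d = (r : ℂ)} := by
    ext χ
    simp only [Set.mem_setOf_eq]
    constructor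
    · intro hχ
      by_cases h1 : χ = 1
      · exact Or.inl h1
      · right
        have hΦ2r : Φ χ H = 2*(r:ℂ) := by
          rw [ΦHS]
          rw [Finset.sum_congr rfl fun g hg => hχ g (Finset.mem_filter.mp hg).2]
          rw [Finset.sum_const, hcardfilter]
          push_cast
          ring
        rcases tri χ h1 with h|h|h
        · exact h
        · rw [ΦHval2 χ h1 (Or.inl h)] at hΦ2r
          exfalso
          simp at hΦ2r
          exact hrpos.ne' hΦ2r
        · rw [ΦHval2 χ h1 (Or.inr h)] at hΦ2r
          exfalso
          simp at hΦ2r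
          exact hrpos.ne' hΦ2r
    · intro hχ s hs
      by_cases h1 : χ = 1
      · rw [h1]; simp
      · rcases hχ with h|hD
        · exact absurd h h1
        · have hΦ : Φ χ H = (Finset.univ.filter (· ∈ S)).card := by
            rw [ΦHval1 χ (Or.inr hD), hcardfilter]
            push_cast
            ring
          rw [ΦHS] at hΦ
          exact aux_forcing _ χ hΦ s (Finset.mem_filter.mpr ⟨Finset.mem_univ s, hs⟩)
  -- every element of S has 2-power order
  set N : ℕ := Fintype.card G with hNdef
  set a : ℕ := N.factorization 2 with hadef
  set w : ℕ := N / 2^a with hwdef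
  have hNpos : 0 < N := Fintype.card_pos
  have hfact : 2^a * w = N := Nat.ordProj_mul_ordCompl_eq_self N 2
  have hodd : ¬ 2 ∣ w := Nat.not_dvd_ordCompl Nat.prime_two hNpos.ne'
  have hwpos : 0 < w := Nat.ordCompl_pos 2 hNpos.ne'
  have hSpow : ∀ s : G, s ∈ S → s^(2^a) = 1 := by
    intro s hs
    by_contra hne
    obtain ⟨χ, hχ⟩ := aux_exists_char (a := s^(2^a)) hne
    set ψ : G →* ℂ := χ^(2^a) with hψdef
    have hψval : ∀ g : G, ψ g = χ g ^ (2^a) := fun g => by rw [hψdef]; simp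
    have hψw : ∀ d ∈ D, (ψ d)^w = 1 := by
      intro d _
      rw [hψval, ← pow_mul, ← map_pow, hfact, hNdef, pow_card_eq_one, map_one]
    have hψS : ∀ h ∈ S, ψ h = 1 := by
      have hmem : ψ ∈ {χ : G →* ℂ | χ = 1 ∨ ∑ d ∈ D, χ d = (r:ℂ)} := by
        by_cases hψ1 : ψ = 1
        · exact Or.inl hψ1
        · rcases tri ψ hψ1 with h|h|h
          · exact Or.inr h
          · exfalso
            refine aux_no_I hodd hwpos D ψ hψw (r:ℚ) (by exact_mod_cast hrpos.ne') ?_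
            rw [h]
            norm_num
          · exfalso
            refine aux_no_I hodd hwpos D ψ hψw (-(r:ℚ)) (by
              simp
              exact_mod_cast hrpos.ne') ?_
            rw [h]
            push_cast
            ring
      rw [← hann] at hmem
      exact hmem
    have := hψS s hs
    rw [hψval, ← map_pow] at this
    exact hχ this
  haveI : Fact (Nat.Prime 2) := ⟨Nat.prime_two⟩
  have hPS : IsPGroup 2 S := by
    intro x
    refine ⟨a, ?_⟩
    have hx : ((x ^ (2^a) : S) : G) = 1 := by
      rw [SubmonoidClass.coe_pow]
      exact hSpow x.1 x.2
    exact Subtype.ext (by rw [hx]; rfl)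
  obtain ⟨c, hc⟩ := (IsPGroup.iff_card (p := 2) (G := S)).mp hPS
  rw [cardS] at hc
  obtain ⟨e, rfl⟩ : ∃ e, c = e + 1 := by
    rcases c with _|c
    · exfalso
      rw [pow_zero] at hc
      omega
    · exact ⟨c, rfl⟩
  have hre : r = 2^e := by
    rw [pow_succ] at hc
    omega
  have hn2 : n = 2^(2*e) := by
    rw [← hr, hre, ← pow_mul, mul_comm e 2]
  have hv2 : v = 2^(2*e+2) := by
    rw [hv4, hn2, pow_add]
    ring
  refine ⟨⟨S, fun g => ?_, cardS, Hsq, ?_, hann⟩, ?_, ⟨e+1, ?_, ?_, ?_, ?_, ?_⟩⟩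
  · by_cases hg : g ∈ S
    · rw [if_pos hg]
      exact (memS g).mp hg
    · rw [if_neg hg]
      rcases H01 g with h|h
      · exact h
      · exact absurd ((memS g).mpr h) hg
  · refine Finsupp.ext fun g => ?_
    rw [Finsupp.equivMapDomain_apply]
    rw [show (Equiv.inv G).symm g = g⁻¹ from rfl]
    exact Hsymm g
  · rw [IsPGroup.iff_card (p := 2)]
    exact ⟨2*e+2, by rw [Nat.card_eq_fintype_card, ← hNdef, hv, hv2]⟩
  · omega
  · rw [show 2*(e+1) = 2*e+2 by omega]
    exact hv2
  · rw [hkn, hn2, hre, show 2*(e+1)-1 = 2*e+1 by omega, show (e+1)-1 = e by omega, pow_succ]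
    ring
  · rw [hlam, hn2, hre, show 2*(e+1)-2 = 2*e by omega, show (e+1)-1 = e by omega]
  · rw [show 2*(e+1)-2 = 2*e by omega]
    exact hn2
end
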